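/- For 4/3 < σ < 2 there exist constants 0 < c ≤ C such that c · r^{-1-σ} ≤ |p''(r)| ≤ C · r^{-1-σ} for all r ≥ 1, where p(r) = (r² + r^{2-σ})^{1/2}. -/

import Mathlib

set_option maxHeartbeats 1000000

open Real Filter

lemma aux_deriv1 (σ x : ℝ) (hx : 0 < x) :
    HasDerivAt (fun r : ℝ => Real.sqrt (r ^ (2:ℝ) + r ^ (2 - σ)))
      ((2 * x ^ ((2:ℝ)-1) + (2-σ) * x ^ (2-σ-1)) /
        (2 * Real.sqrt (x ^ (2:ℝ) + x ^ (2-σ)))) x := by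
  have hfpos : 0 < x ^ (2:ℝ) + x ^ (2-σ) := by positivity
  have hf' : HasDerivAt (fun r : ℝ => r ^ (2:ℝ) + r ^ (2-σ))
      (2 * x ^ ((2:ℝ)-1) + (2-σ) * x ^ (2-σ-1)) x :=
    (Real.hasDerivAt_rpow_const (Or.inl hx.ne')).add
      (Real.hasDerivAt_rpow_const (Or.inl hx.ne'))
  have h := (Real.hasDerivAt_sqrt hfpos.ne').comp x hf'
  refine h.congr_deriv ?_
  ring

lemma aux_deriv2 (σ x : ℝ) (hx : 0 < x) :
    HasDerivAt (fun r : ℝ => (2 * r ^ ((2:ℝ)-1) + (2-σ) * r ^ (2-σ-1)) /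
        (2 * Real.sqrt (r ^ (2:ℝ) + r ^ (2-σ))))
      ((2 * (x ^ (2:ℝ) + x ^ (2-σ)) *
          (2 * (((2:ℝ)-1) * x ^ ((2:ℝ)-1-1)) + (2-σ) * ((2-σ-1) * x ^ (2-σ-1-1)))
        - (2 * x ^ ((2:ℝ)-1) + (2-σ) * x ^ (2-σ-1))^2) /
        (4 * Real.sqrt (x ^ (2:ℝ) + x ^ (2-σ)) ^ 3)) x := by
  have hfpos : 0 < x ^ (2:ℝ) + x ^ (2-σ) := by positivity
  have hs : 0 < Real.sqrt (x ^ (2:ℝ) + x ^ (2-σ)) := Real.sqrt_pos.mpr hfpos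
  have hf' : HasDerivAt (fun r : ℝ => r ^ (2:ℝ) + r ^ (2-σ))
      (2 * x ^ ((2:ℝ)-1) + (2-σ) * x ^ (2-σ-1)) x :=
    (Real.hasDerivAt_rpow_const (Or.inl hx.ne')).add
      (Real.hasDerivAt_rpow_const (Or.inl hx.ne'))
  have hsf : HasDerivAt (fun r : ℝ => Real.sqrt (r ^ (2:ℝ) + r ^ (2-σ)))
      (1 / (2 * Real.sqrt (x ^ (2:ℝ) + x ^ (2-σ))) *
        (2 * x ^ ((2:ℝ)-1) + (2-σ) * x ^ (2-σ-1))) x :=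
    (Real.hasDerivAt_sqrt hfpos.ne').comp x hf'
  have hv' : HasDerivAt (fun r : ℝ => 2 * r ^ ((2:ℝ)-1) + (2-σ) * r ^ (2-σ-1))
      (2 * (((2:ℝ)-1) * x ^ ((2:ℝ)-1-1)) + (2-σ) * ((2-σ-1) * x ^ (2-σ-1-1))) x :=
    ((Real.hasDerivAt_rpow_const (Or.inl hx.ne')).const_mul 2).add
      ((Real.hasDerivAt_rpow_const (Or.inl hx.ne')).const_mul (2-σ))
  have hden : HasDerivAt (fun r : ℝ => 2 * Real.sqrt (r ^ (2:ℝ) + r ^ (2-σ)))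
      (2 * (1 / (2 * Real.sqrt (x ^ (2:ℝ) + x ^ (2-σ))) *
        (2 * x ^ ((2:ℝ)-1) + (2-σ) * x ^ (2-σ-1)))) x := hsf.const_mul 2
  have h := hv'.div hden (by positivity)
  refine h.congr_deriv ?_
  set s := Real.sqrt (x ^ (2:ℝ) + x ^ (2-σ)) with hs_def
  have hs2 : s ^ 2 = x ^ (2:ℝ) + x ^ (2-σ) := Real.sq_sqrt hfpos.le
  rw [← hs2]
  field_simp
  ring

theorem dispersion_second_deriv_high_large_sigma (σ : ℝ) (hσ : 4 / 3 < σ) (hσ2 : σ < 2)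
    (p : ℝ → ℝ) (hp : p = fun r => Real.sqrt (r ^ (2:ℝ) + r ^ (2 - σ))) :
    ∃ c C : ℝ, 0 < c ∧ c ≤ C ∧
      ∀ r : ℝ, 1 ≤ r →
        c * r ^ (-(1 + σ)) ≤ |deriv (deriv p) r| ∧
        |deriv (deriv p) r| ≤ C * r ^ (-(1 + σ)) := by
  subst hp
  have hσ1 : 1 < σ := by linarith
  refine ⟨σ * (3*σ - 4) / 14, σ * (σ - 1) / 2, by nlinarith, by nlinarith, ?_⟩
  intro r hr
  have hr0 : 0 < r := lt_of_lt_of_le one_pos hr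
  have heq : deriv (deriv fun r : ℝ => Real.sqrt (r ^ (2:ℝ) + r ^ (2 - σ))) r
      = (2 * (r ^ (2:ℝ) + r ^ (2-σ)) *
          (2 * (((2:ℝ)-1) * r ^ ((2:ℝ)-1-1)) + (2-σ) * ((2-σ-1) * r ^ (2-σ-1-1)))
        - (2 * r ^ ((2:ℝ)-1) + (2-σ) * r ^ (2-σ-1))^2) /
        (4 * Real.sqrt (r ^ (2:ℝ) + r ^ (2-σ)) ^ 3) := by
    have h1 : deriv (fun r : ℝ => Real.sqrt (r ^ (2:ℝ) + r ^ (2 - σ)))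
        =ᶠ[nhds r] (fun y => (2 * y ^ ((2:ℝ)-1) + (2-σ) * y ^ (2-σ-1)) /
          (2 * Real.sqrt (y ^ (2:ℝ) + y ^ (2-σ)))) := by
      filter_upwards [Ioi_mem_nhds hr0] with y hy
      exact (aux_deriv1 σ y hy).deriv
    rw [h1.deriv_eq]
    exact (aux_deriv2 σ r hr0).deriv
  set t : ℝ := r ^ (-σ) with ht_def
  have ht0 : 0 < t := Real.rpow_pos_of_pos hr0 _
  have ht1 : t ≤ 1 := Real.rpow_le_one_of_one_le_of_nonpos hr (by linarith)
  have er2 : r ^ (2:ℝ) = r ^ 2 := by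
    rw [show (2:ℝ) = ((2:ℕ):ℝ) by norm_num, Real.rpow_natCast]
  have e1 : r ^ ((2:ℝ)-1) = r := by norm_num
  have e12 : r ^ ((2:ℝ)-1-1) = 1 := by norm_num
  have e2 : r ^ (2-σ) = r ^ 2 * t := by
    rw [ht_def, show (2-σ:ℝ) = (2:ℝ) + (-σ) by ring, Real.rpow_add hr0, er2]
  have e3 : r ^ (2-σ-1) = r * t := by
    rw [ht_def, show (2-σ-1:ℝ) = (1:ℝ) + (-σ) by ring, Real.rpow_add hr0, Real.rpow_one]
  have e4 : r ^ (2-σ-1-1) = t := by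
    rw [ht_def, show (2-σ-1-1:ℝ) = -σ by ring]
  have e6 : r ^ (-(1+σ)) = t / r := by
    rw [ht_def, show (-(1+σ):ℝ) = (-1) + (-σ) by ring, Real.rpow_add hr0,
      Real.rpow_neg_one]
    ring
  set s : ℝ := Real.sqrt (r ^ (2:ℝ) + r ^ (2-σ)) with hs_def
  have hfpos : 0 < r ^ (2:ℝ) + r ^ (2-σ) := by positivity
  have hs0 : 0 < s := Real.sqrt_pos.mpr hfpos
  have hs2 : s ^ 2 = r ^ 2 + r ^ 2 * t := by
    rw [hs_def, Real.sq_sqrt hfpos.le, er2, e2]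
  have hs_low : r ≤ s := by nlinarith
  have hs_up : s ≤ 3/2 * r := by nlinarith
  have hs3_low : r ^ 3 ≤ s ^ 3 := pow_le_pow_left₀ hr0.le hs_low 3
  have hs3_up : s ^ 3 ≤ 27/8 * r ^ 3 := by
    calc s ^ 3 ≤ (3/2 * r) ^ 3 := pow_le_pow_left₀ hs0.le hs_up 3
    _ = 27/8 * r ^ 3 := by ring
  have hprod : 0 ≤ σ * (2-σ) * t := by
    apply mul_nonneg (mul_nonneg (by linarith) (by linarith)) ht0.le
  have hprod2 : σ * (2-σ) * t ≤ σ * (2-σ) := by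
    have h1 : (0:ℝ) ≤ σ * (2-σ) := mul_nonneg (by linarith) (by linarith)
    have h2 := mul_le_mul_of_nonneg_left ht1 h1
    linarith [h2]
  have hM : σ * (3*σ - 4) ≤ 2*σ*(σ-1) - σ*(2-σ)*t := by nlinarith [hprod2]
  have hM' : 2*σ*(σ-1) - σ*(2-σ)*t ≤ 2*σ*(σ-1) := by linarith [hprod]
  have hMpos : 0 < 2*σ*(σ-1) - σ*(2-σ)*t := by nlinarith [hM]
  have hN : 2 * (r ^ (2:ℝ) + r ^ (2-σ)) *
          (2 * (((2:ℝ)-1) * r ^ ((2:ℝ)-1-1)) + (2-σ) * ((2-σ-1) * r ^ (2-σ-1-1)))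
        - (2 * r ^ ((2:ℝ)-1) + (2-σ) * r ^ (2-σ-1))^2
      = r ^ 2 * t * (2*σ*(σ-1) - σ*(2-σ)*t) := by
    rw [er2, e1, e12, e2, e3, e4]
    ring
  rw [heq, hN, e6]
  have hr2t : (0:ℝ) ≤ r ^ 2 * t := by positivity
  have hA : σ*(3*σ-4)*(r ^ 2*t) ≤ r ^ 2*t*(2*σ*(σ-1) - σ*(2-σ)*t) := by
    nlinarith [mul_le_mul_of_nonneg_left hM hr2t]
  have hB : r ^ 2*t*(2*σ*(σ-1)-σ*(2-σ)*t) ≤ 2*σ*(σ-1)*(r ^ 2*t) := by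
    nlinarith [mul_le_mul_of_nonneg_left hM' hr2t]
  have hs3pos : (0:ℝ) < s ^ 3 := pow_pos hs0 3
  have hD1 : (0:ℝ) < 4 * s ^ 3 := by linarith
  have hD2 : 4 * s ^ 3 ≤ 14 * r ^ 3 := by nlinarith
  have hD3 : 4 * r ^ 3 ≤ 4 * s ^ 3 := by linarith
  have hTpos : 0 < r ^ 2 * t * (2*σ*(σ-1) - σ*(2-σ)*t) / (4 * s ^ 3) :=
    div_pos (mul_pos (mul_pos (pow_pos hr0 2) ht0) hMpos) hD1
  rw [abs_of_pos hTpos]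
  constructor
  · calc σ * (3*σ - 4) / 14 * (t / r) = σ * (3*σ-4) * (r ^ 2 * t) / (14 * r ^ 3) := by
          field_simp
    _ ≤ r ^ 2 * t * (2*σ*(σ-1) - σ*(2-σ)*t) / (4 * s ^ 3) :=
          div_le_div₀ (mul_nonneg hr2t hMpos.le) hA hD1 hD2
  · calc r ^ 2 * t * (2*σ*(σ-1) - σ*(2-σ)*t) / (4 * s ^ 3)
        ≤ 2*σ*(σ-1) * (r ^ 2 * t) / (4 * r ^ 3) :=
          div_le_div₀ (mul_nonneg (by nlinarith : (0:ℝ) ≤ 2*σ*(σ-1)) hr2t) hB (by positivity) hD3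
    _ = σ * (σ - 1) / 2 * (t / r) := by field_simp; ring
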